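/- Let H be a finite group of odd order such that d(H) = 2. Then the nim-number of the achievement game GEN((Z/2 × Z/2) × H) is *1. -/

import Mathlib

universe u

/-- Ordinals with nimber arithmetic (Mathlib's former `Nimber`, a type synonym of `Ordinal`). -/
def Nimber : Type (u + 1) := Ordinal.{u}

namespace Nimber

/-- The identity `Ordinal → Nimber` (Mathlib's former `toNimber`). -/
def toNimber : Ordinal.{u} → Nimber.{u} := id

/-- The identity `Nimber → Ordinal` (Mathlib's former `Nimber.toOrdinal`). -/
def toOrdinal : Nimber.{u} → Ordinal.{u} := id

end Nimber

prefix:75 "∗" => Nimber.toNimber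

namespace SetTheory

/-- Mathlib's former pre-games. -/
inductive PGame : Type (u + 1)
  | mk : ∀ α β : Type u, (α → PGame) → (β → PGame) → PGame

namespace PGame

/-- The zero pre-game, with no moves. -/
instance : Zero PGame.{u} :=
  ⟨PGame.mk PEmpty PEmpty PEmpty.elim PEmpty.elim⟩

/-- The Grundy value of an impartial pre-game: the mex of the Grundy values of its left options. -/
noncomputable def grundyValue : PGame.{u} → Nimber.{u}
  | PGame.mk _ _ L _ =>
    Nimber.toNimber (sInf (Set.range fun i => Nimber.toOrdinal (grundyValue (L i)))ᶜ)

end PGame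

end SetTheory

open SetTheory Nimber
open scoped Classical

/-- The achievement game `GEN(G)` of Anderson and Harary: positions are (finite) subsets
of the finite group `G`; a position that generates `G` is terminal, and otherwise the
options are obtained by selecting a previously-unselected element of `G`.  The game is
impartial, so the left and right options agree. -/
noncomputable def genGame {G : Type} [Group G] [Fintype G] (P : Finset G) : PGame :=
  if Subgroup.closure (P : Set G) = ⊤ then 0
  else
    PGame.mk {g : G // g ∉ P} {g : G // g ∉ P}
      (fun g => genGame (insert g.1 P)) (fun g => genGame (insert g.1 P))
termination_by Fintype.card G - P.card
decreasing_by
  all_goals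
    have h1 : (insert g.1 P).card = P.card + 1 := Finset.card_insert_of_notMem g.2
    have h2 : (insert g.1 P).card ≤ Fintype.card G := Finset.card_le_univ _
    omega

/-- The nim-number of the achievement game `GEN(G)`, i.e. the Sprague-Grundy value of the
starting position `∅`. -/
noncomputable def nimGEN (G : Type) [Group G] [Fintype G] : Nimber :=
  PGame.grundyValue (genGame (∅ : Finset G))

/-- `d(G)`: the minimal cardinality of a generating set of `G`. -/
noncomputable def minGen (G : Type) [Group G] : ℕ :=
  sInf {n : ℕ | ∃ S : Finset G, S.card = n ∧ Subgroup.closure (S : Set G) = ⊤}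

noncomputable instance : ConditionallyCompleteLinearOrderBot Nimber.{u} :=
  inferInstanceAs (ConditionallyCompleteLinearOrderBot Ordinal.{u})

instance : Zero Nimber.{u} := ⟨∗0⟩

instance : One Nimber.{u} := ⟨∗1⟩

theorem SetTheory.PGame.grundyValue_zero : PGame.grundyValue (0 : PGame.{u}) = 0 := by
  show Nimber.toNimber (sInf (Set.range fun i : PEmpty => _)ᶜ) = ∗0
  rw [Set.range_eq_empty, Set.compl_empty, csInf_univ]
  rfl

lemma nimber_lt_one {b : Nimber} (h : b < 1) : b = 0 := Ordinal.lt_one_iff_zero.1 h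

/-! ### mex helpers -/

lemma mex_eq_zero {S : Set Nimber} (h : (0 : Nimber) ∉ S) : sInf Sᶜ = 0 := by
  have h' : (0 : Nimber) ∈ Sᶜ := h
  exact le_antisymm (csInf_le (OrderBot.bddBelow _) h') bot_le

lemma mex_eq_one {S : Set Nimber} (h0 : (0:Nimber) ∈ S) (h1 : (1:Nimber) ∉ S) : sInf Sᶜ = 1 := by
  have h' : (1 : Nimber) ∈ Sᶜ := h1
  refine le_antisymm (csInf_le (OrderBot.bddBelow _) h') (le_csInf ⟨1, h'⟩ ?_)
  intro b hb
  by_contra hlt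
  exact hb (nimber_lt_one (not_le.1 hlt) ▸ h0)

lemma nimber_lt_two {b : Nimber} (h : b < ∗2) : b = 0 ∨ b = 1 := by
  have h' : Nimber.toOrdinal b < 2 := h
  have h2 : Nimber.toOrdinal b ≤ 1 := by
    have he : (2 : Ordinal) = Order.succ 1 := by
      rw [← Ordinal.add_one_eq_succ]; norm_num
    rw [he, Order.lt_succ_iff] at h'
    exact h'
  rcases Ordinal.le_one_iff.1 h2 with h | h
  · left; exact h
  · right; exact h

lemma mex_eq_two {S : Set Nimber} (h0 : (0:Nimber) ∈ S) (h1 : (1:Nimber) ∈ S)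
    (h2 : ∗2 ∉ S) : sInf Sᶜ = ∗2 := by
  have h' : ∗2 ∈ Sᶜ := h2
  refine le_antisymm (csInf_le (OrderBot.bddBelow _) h') (le_csInf ⟨_, h'⟩ ?_)
  intro b hb
  by_contra hlt
  rcases nimber_lt_two (not_le.1 hlt) with rfl | rfl
  exacts [hb h0, hb h1]

lemma star2_ne_zero : (∗2 : Nimber) ≠ 0 := by
  show (2 : Ordinal) ≠ 0; norm_num

lemma star2_ne_one : (∗2 : Nimber) ≠ 1 := by
  show (2 : Ordinal) ≠ 1; norm_num

lemma nimber_zero_ne_one : (0 : Nimber) ≠ 1 := by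
  show (0 : Ordinal) ≠ 1
  exact zero_ne_one

/-! ### the Klein four group -/

abbrev Vkl := Multiplicative (ZMod 2) × Multiplicative (ZMod 2)

lemma Vkl_sq (v : Vkl) : v * v = 1 := by revert v; decide

lemma Vkl_exists_compl : ∀ a : Vkl, a ≠ 1 →
    ∃ v : Vkl, v ≠ 1 ∧ ∀ w : Vkl, w = 1 ∨ w = a ∨ w = v ∨ w = a * v := by decide

lemma Vkl_exists_ne (v : Vkl) : ∃ w : Vkl, w ≠ 1 ∧ w ≠ v := by revert v; decide

lemma Vkl_card_even : Even (Fintype.card Vkl) := by decide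

/-- the subgroup {1, v} of the Klein four-group -/
def pairSub (v : Vkl) : Subgroup Vkl where
  carrier := {x | x = 1 ∨ x = v}
  one_mem' := Or.inl rfl
  mul_mem' := by
    intro a b ha hb
    rcases ha with rfl | rfl <;> rcases hb with rfl | rfl <;>
      simp [Vkl_sq, Set.mem_setOf_eq]
  inv_mem' := by
    intro a ha
    have h : a⁻¹ = a := inv_eq_of_mul_eq_one_right (Vkl_sq a)
    rwa [h]

lemma Vkl_not_cyclic (v : Vkl) : Subgroup.closure ({v} : Set Vkl) ≠ ⊤ := by
  intro htop
  obtain ⟨w, hw1, hwv⟩ := Vkl_exists_ne v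
  have hle : Subgroup.closure ({v} : Set Vkl) ≤ pairSub v :=
    Subgroup.closure_le _ |>.2 (by intro x hx; rcases hx with rfl; exact Or.inr rfl)
  have : w ∈ Subgroup.closure ({v} : Set Vkl) := htop ▸ Subgroup.mem_top w
  rcases hle this with h | h
  exacts [hw1 h, hwv h]

lemma Vkl_bot_ne_top : (⊥ : Subgroup Vkl) ≠ ⊤ := by
  intro h
  obtain ⟨w, hw1, -⟩ := Vkl_exists_ne 1
  exact hw1 (Subgroup.mem_bot.1 (h ▸ Subgroup.mem_top w))

lemma Vkl_complete (A : Subgroup Vkl) (hA : A ≠ ⊥) :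
    ∃ v : Vkl, A ⊔ Subgroup.closure {v} = ⊤ ∧ (A ≠ ⊤ → v ∉ A) := by
  obtain ⟨a, haA, ha1⟩ : ∃ a, a ∈ A ∧ a ≠ 1 := by
    by_contra hall
    push_neg at hall
    exact hA (eq_bot_iff.2 fun x hx => Subgroup.mem_bot.2 (hall x hx))
  obtain ⟨v, hv1, hvall⟩ := Vkl_exists_compl a ha1
  have hvcl : v ∈ Subgroup.closure ({v} : Set Vkl) := Subgroup.mem_closure_singleton_self v
  have htop : A ⊔ Subgroup.closure {v} = ⊤ := by
    rw [Subgroup.eq_top_iff']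
    intro w
    rcases hvall w with rfl | rfl | rfl | rfl
    · exact one_mem _
    · exact Subgroup.mem_sup_left haA
    · exact Subgroup.mem_sup_right hvcl
    · exact mul_mem (Subgroup.mem_sup_left haA) (Subgroup.mem_sup_right hvcl)
  refine ⟨v, htop, fun hAtop hvA => hAtop ?_⟩
  rw [← htop, sup_eq_left.2 ((Subgroup.closure_le _).2 (by simpa using hvA))]

lemma Vkl_even_subgroup_card {A : Subgroup Vkl} (hA : A ≠ ⊥) :
    Even (Nat.card ↥A) := by
  obtain ⟨a, haA, ha1⟩ : ∃ a, a ∈ A ∧ a ≠ 1 := by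
    by_contra hall
    push_neg at hall
    exact hA (eq_bot_iff.2 fun x hx => Subgroup.mem_bot.2 (hall x hx))
  have horder : orderOf (⟨a, haA⟩ : ↥A) = 2 := by
    refine orderOf_eq_prime (Subtype.ext ?_) ?_
    · simpa [pow_two] using Vkl_sq a
    · intro h
      exact ha1 (congrArg Subtype.val h)
  rw [even_iff_two_dvd]
  have hdvd := orderOf_dvd_natCard (⟨a, haA⟩ : ↥A)
  rwa [horder] at hdvd

/-! ### subgroups of `Vkl × H` split as products -/

section ProductGroup

set_option linter.unusedSectionVars false

variable {H : Type} [Group H] [Fintype H]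

/-- `B` generates `H` together with at most one more element. -/
def ccl (B : Subgroup H) : Prop := ∃ x : H, B ⊔ Subgroup.closure {x} = ⊤

lemma ccl_mono {B B' : Subgroup H} (h : B ≤ B') : ccl B → ccl B' := fun ⟨x, hx⟩ =>
  ⟨x, top_le_iff.1 (hx ▸ sup_le_sup_right h _)⟩

lemma ccl_top : ccl (⊤ : Subgroup H) := ⟨1, by simp⟩

lemma ccl_of_mem {B : Subgroup H} {x y : H}
    (hxy : Subgroup.closure ({x, y} : Set H) = ⊤) (hx : x ∈ B) : ccl B := by
  refine ⟨y, top_le_iff.1 ?_⟩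
  rw [← hxy, Set.insert_eq, Subgroup.closure_union]
  exact sup_le_sup_right ((Subgroup.closure_le _).2 (by simpa using hx)) _

lemma ccl_sup_closure {B : Subgroup H} {x y : H}
    (hxy : Subgroup.closure ({x, y} : Set H) = ⊤) :
    ccl (Subgroup.closure {x} ⊔ B) := by
  refine ⟨y, top_le_iff.1 ?_⟩
  rw [← hxy, Set.insert_eq, Subgroup.closure_union]
  exact sup_le_sup (le_sup_left) le_rfl

abbrev APr (P : Finset (Vkl × H)) : Subgroup Vkl :=
  Subgroup.closure (Prod.fst '' (↑P : Set (Vkl × H)))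

abbrev BPr (P : Finset (Vkl × H)) : Subgroup H :=
  Subgroup.closure (Prod.snd '' (↑P : Set (Vkl × H)))

lemma mem_APr_of_mem {P : Finset (Vkl × H)} {g : Vkl × H} (hg : g ∈ P) : g.1 ∈ APr P :=
  Subgroup.subset_closure (Set.mem_image_of_mem Prod.fst (Finset.mem_coe.2 hg))

lemma mem_BPr_of_mem {P : Finset (Vkl × H)} {g : Vkl × H} (hg : g ∈ P) : g.2 ∈ BPr P :=
  Subgroup.subset_closure (Set.mem_image_of_mem Prod.snd (Finset.mem_coe.2 hg))

lemma APr_insert (g : Vkl × H) (P : Finset (Vkl × H)) :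
    APr (insert g P) = Subgroup.closure {g.1} ⊔ APr P := by
  unfold APr
  rw [Finset.coe_insert, Set.image_insert_eq, ← Set.singleton_union, Subgroup.closure_union]

lemma BPr_insert (g : Vkl × H) (P : Finset (Vkl × H)) :
    BPr (insert g P) = Subgroup.closure {g.2} ⊔ BPr P := by
  unfold BPr
  rw [Finset.coe_insert, Set.image_insert_eq, ← Set.singleton_union, Subgroup.closure_union]

lemma APr_empty : APr (∅ : Finset (Vkl × H)) = ⊥ := by
  unfold APr; simp

lemma BPr_empty : BPr (∅ : Finset (Vkl × H)) = ⊥ := by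
  unfold BPr; simp

variable (hodd : Odd (Fintype.card H))
include hodd

lemma fst_one_mem (K : Subgroup (Vkl × H)) {v : Vkl} {h : H}
    (hvh : (v, h) ∈ K) : ((v, (1:H)) : Vkl × H) ∈ K := by
  obtain ⟨k, hk⟩ := hodd
  have hp : ((v, h) : Vkl × H) ^ (Fintype.card H) ∈ K := pow_mem hvh _
  have h1 : ((v, h) : Vkl × H) ^ (Fintype.card H)
      = (v ^ Fintype.card H, h ^ Fintype.card H) := rfl
  have h2 : h ^ Fintype.card H = 1 := pow_card_eq_one
  have h3 : v ^ Fintype.card H = v := by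
    rw [hk, pow_add, pow_mul, pow_two, Vkl_sq, one_pow, one_mul, pow_one]
  rwa [h1, h2, h3] at hp

lemma snd_one_mem (K : Subgroup (Vkl × H)) {v : Vkl} {h : H}
    (hvh : (v, h) ∈ K) : (((1:Vkl), h) : Vkl × H) ∈ K := by
  have h1 := fst_one_mem hodd K hvh
  have h2 : (((1:Vkl), h) : Vkl × H) = ((v, (1:H)) : Vkl × H)⁻¹ * (v, h) := by
    simp
  rw [h2]
  exact mul_mem (inv_mem h1) hvh

lemma closure_eq_prod (P : Finset (Vkl × H)) :
    Subgroup.closure (↑P : Set (Vkl × H)) = (APr P).prod (BPr P) := by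
  apply le_antisymm
  · rw [Subgroup.closure_le]
    intro g hg
    exact Subgroup.mem_prod.2 ⟨mem_APr_of_mem (Finset.mem_coe.1 hg),
      mem_BPr_of_mem (Finset.mem_coe.1 hg)⟩
  · rintro ⟨v, h⟩ hvh
    rw [Subgroup.mem_prod] at hvh
    have h1 : ((v, (1:H)) : Vkl × H) ∈ Subgroup.closure (↑P : Set (Vkl × H)) := by
      refine Subgroup.closure_induction
        (p := fun x _ => ((x, (1:H)) : Vkl × H) ∈ Subgroup.closure (↑P : Set (Vkl × H)))
        ?_ ?_ ?_ ?_ hvh.1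
      · rintro x ⟨g, hg, rfl⟩
        exact fst_one_mem hodd _ (Subgroup.subset_closure hg)
      · exact one_mem _
      · intro x y hx hy hx' hy'
        have := mul_mem hx' hy'
        simpa using this
      · intro x hx hx'
        have := inv_mem hx'
        simpa using this
    have h2 : (((1:Vkl), h) : Vkl × H) ∈ Subgroup.closure (↑P : Set (Vkl × H)) := by
      refine Subgroup.closure_induction
        (p := fun x _ => (((1:Vkl), x) : Vkl × H) ∈ Subgroup.closure (↑P : Set (Vkl × H)))
        ?_ ?_ ?_ ?_ hvh.2
      · rintro x ⟨g, hg, rfl⟩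
        exact snd_one_mem hodd _ (Subgroup.subset_closure hg)
      · exact one_mem _
      · intro x y hx hy hx' hy'
        have := mul_mem hx' hy'
        simpa using this
      · intro x hx hx'
        have := inv_mem hx'
        simpa using this
    have := mul_mem h1 h2
    simpa using this

lemma closure_top_iff (P : Finset (Vkl × H)) :
    Subgroup.closure (↑P : Set (Vkl × H)) = ⊤ ↔ APr P = ⊤ ∧ BPr P = ⊤ := by
  rw [closure_eq_prod hodd]
  constructor
  · intro h
    constructor
    · rw [Subgroup.eq_top_iff']
      intro v
      have : ((v, (1:H)) : Vkl × H) ∈ (APr P).prod (BPr P) := h ▸ Subgroup.mem_top _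
      exact (Subgroup.mem_prod.1 this).1
    · rw [Subgroup.eq_top_iff']
      intro x
      have : (((1:Vkl), x) : Vkl × H) ∈ (APr P).prod (BPr P) := h ▸ Subgroup.mem_top _
      exact (Subgroup.mem_prod.1 this).2
  · rintro ⟨hA, hB⟩
    rw [Subgroup.eq_top_iff']
    intro g
    exact Subgroup.mem_prod.2 ⟨hA ▸ Subgroup.mem_top _, hB ▸ Subgroup.mem_top _⟩

end ProductGroup

/-! ### the Grundy value function -/

section Gamma

set_option linter.unusedSectionVars false

variable {H : Type} [Group H] [Fintype H]

noncomputable def gam (P : Finset (Vkl × H)) : Nimber :=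
  if APr P = ⊤ ∧ BPr P = ⊤ then 0
  else if Even P.card then (if APr P ≠ ⊥ ∧ ¬ ccl (BPr P) then 0 else 1)
  else (if APr P = ⊥ ∧ ccl (BPr P) then 0 else ∗2)

lemma gam_terminal {P : Finset (Vkl × H)} (h1 : APr P = ⊤) (h2 : BPr P = ⊤) :
    gam P = 0 := by
  unfold gam; rw [if_pos ⟨h1, h2⟩]

lemma gam_even_eq_zero {P : Finset (Vkl × H)} (hnt : ¬(APr P = ⊤ ∧ BPr P = ⊤))
    (he : Even P.card) (h1 : APr P ≠ ⊥) (h2 : ¬ ccl (BPr P)) : gam P = 0 := by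
  unfold gam; rw [if_neg hnt, if_pos he, if_pos ⟨h1, h2⟩]

lemma gam_even_eq_one {P : Finset (Vkl × H)} (hnt : ¬(APr P = ⊤ ∧ BPr P = ⊤))
    (he : Even P.card) (h1 : ¬(APr P ≠ ⊥ ∧ ¬ ccl (BPr P))) : gam P = 1 := by
  unfold gam; rw [if_neg hnt, if_pos he, if_neg h1]

lemma gam_odd_eq_zero {P : Finset (Vkl × H)} (hnt : ¬(APr P = ⊤ ∧ BPr P = ⊤))
    (he : ¬ Even P.card) (h1 : APr P = ⊥) (h2 : ccl (BPr P)) : gam P = 0 := by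
  unfold gam; rw [if_neg hnt, if_neg he, if_pos ⟨h1, h2⟩]

lemma gam_odd_eq_two {P : Finset (Vkl × H)} (hnt : ¬(APr P = ⊤ ∧ BPr P = ⊤))
    (he : ¬ Even P.card) (h1 : ¬(APr P = ⊥ ∧ ccl (BPr P))) : gam P = ∗2 := by
  unfold gam; rw [if_neg hnt, if_neg he, if_neg h1]

lemma gam_ne_one_of_odd {P : Finset (Vkl × H)} (he : ¬ Even P.card) : gam P ≠ 1 := by
  unfold gam
  split_ifs with h1 h2 h3 h4 <;>
    first
      | exact nimber_zero_ne_one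
      | exact star2_ne_one
      | exact absurd h2 he

lemma gam_ne_two_of_even {P : Finset (Vkl × H)} (he : Even P.card) : gam P ≠ ∗2 := by
  unfold gam
  split_ifs with h1 h2 h3 h4 <;>
    first
      | exact fun h => star2_ne_zero h.symm
      | exact fun h => star2_ne_one h.symm
      | exact absurd he (by assumption)

lemma gam_even_ne_zero {P : Finset (Vkl × H)} (he : Even P.card)
    (hnt : ¬(APr P = ⊤ ∧ BPr P = ⊤)) (hc : ¬(APr P ≠ ⊥ ∧ ¬ ccl (BPr P))) :
    gam P ≠ 0 := by
  rw [gam_even_eq_one hnt he hc]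
  exact fun h => nimber_zero_ne_one h.symm

lemma gam_odd_ne_zero {P : Finset (Vkl × H)} (he : ¬ Even P.card)
    (hB : BPr P ≠ ⊤) (hc : ¬(APr P = ⊥ ∧ ccl (BPr P))) : gam P ≠ 0 := by
  rw [gam_odd_eq_two (fun h => hB h.2) he hc]
  exact star2_ne_zero

end Gamma

/-! ### consequences of `minGen H = 2` -/

section MinGen

set_option linter.unusedSectionVars false

variable {H : Type} [Group H] [Fintype H] (hd : minGen H = 2)
include hd

lemma exists_gen_pair : ∃ x y : H, Subgroup.closure ({x, y} : Set H) = ⊤ := by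
  have hne : {n : ℕ | ∃ S : Finset H, S.card = n ∧ Subgroup.closure (S : Set H) = ⊤}.Nonempty := by
    refine ⟨(Finset.univ : Finset H).card, Finset.univ, rfl, ?_⟩
    rw [Finset.coe_univ, Subgroup.closure_univ]
  have hmem := Nat.sInf_mem hne
  rw [← minGen, hd] at hmem
  obtain ⟨S, hcard, hgen⟩ := hmem
  obtain ⟨x, y, hxy, rfl⟩ := Finset.card_eq_two.1 hcard
  refine ⟨x, y, ?_⟩
  rwa [show ((↑({x, y} : Finset H) : Set H)) = {x, y} by simp] at hgen

lemma H_not_cyclic : ∀ x : H, Subgroup.closure ({x} : Set H) ≠ ⊤ := by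
  intro x hx
  have h1 : 1 ∈ {n : ℕ | ∃ S : Finset H, S.card = n ∧ Subgroup.closure (S : Set H) = ⊤} := by
    refine ⟨{x}, Finset.card_singleton x, ?_⟩
    rwa [show ((↑({x} : Finset H) : Set H)) = {x} by simp]
  have := Nat.sInf_le h1
  rw [← minGen, hd] at this
  omega

lemma ccl_bot_false : ¬ ccl (⊥ : Subgroup H) := by
  rintro ⟨x, hx⟩
  rw [bot_sup_eq] at hx
  exact H_not_cyclic hd x hx

end MinGen

/-! ### small helpers -/

lemma finset_exists_not_mem {α : Type*} {P Q : Finset α} (hsub : P ⊆ Q)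
    (hne : P.card ≠ Q.card) : ∃ g ∈ Q, g ∉ P := by
  have hss : P ⊂ Q := Finset.ssubset_iff_subset_ne.2 ⟨hsub, fun h => hne (by rw [h])⟩
  exact Finset.exists_of_ssubset hss

/-! ### moves -/

section Moves

set_option linter.unusedSectionVars false

variable {H : Type} [Group H] [Fintype H]

lemma APr_insert_one {P : Finset (Vkl × H)} {g : Vkl × H} (hg1 : g.1 = 1) :
    APr (insert g P) = APr P := by
  rw [APr_insert, hg1, Subgroup.closure_singleton_one, bot_sup_eq]

lemma Vkl_even_filter {A : Subgroup Vkl} (hA : A ≠ ⊥) :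
    Even ((Finset.univ.filter (fun v : Vkl => v ∈ A)).card) := by
  have h1 := Vkl_even_subgroup_card hA
  have h2 : Nat.card ↥A = (Finset.univ.filter (fun v : Vkl => v ∈ A)).card := by
    rw [Nat.card_eq_fintype_card, Fintype.card_subtype]
  rwa [h2] at h1

lemma terminal_move {P : Finset (Vkl × H)}
    (hccB : ccl (BPr P)) (hA : APr P ≠ ⊥) (hnt : ¬(APr P = ⊤ ∧ BPr P = ⊤)) :
    ∃ g : Vkl × H, g ∉ P ∧ APr (insert g P) = ⊤ ∧ BPr (insert g P) = ⊤ := by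
  obtain ⟨v, hv, hvnot⟩ := Vkl_complete (APr P) hA
  obtain ⟨x, hx⟩ := hccB
  refine ⟨(v, x), ?_, ?_, ?_⟩
  · intro hgP
    by_cases hAtop : APr P = ⊤
    · have hBtop : BPr P ≠ ⊤ := fun h => hnt ⟨hAtop, h⟩
      have hxB : x ∈ BPr P := mem_BPr_of_mem hgP
      exact hBtop (by
        rw [← hx, sup_eq_left.2 ((Subgroup.closure_le _).2 (by simpa using hxB))])
    · exact hvnot hAtop (mem_APr_of_mem hgP)
  · rw [APr_insert, sup_comm]; exact hv
  · rw [BPr_insert, sup_comm]; exact hx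

lemma fresh_gen_move (hd : minGen H = 2) {P : Finset (Vkl × H)} (hnc : ¬ ccl (BPr P)) :
    ∃ g : Vkl × H, g ∉ P ∧ g.1 = 1 ∧ ccl (BPr (insert g P)) ∧ BPr (insert g P) ≠ ⊤ := by
  obtain ⟨x, y, hxy⟩ := exists_gen_pair hd
  have hxB : x ∉ BPr P := fun hxB => hnc (ccl_of_mem hxy hxB)
  refine ⟨((1:Vkl), x), fun hgP => hxB (mem_BPr_of_mem hgP), rfl, ?_, ?_⟩
  · rw [BPr_insert]; exact ccl_sup_closure hxy
  · rw [BPr_insert]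
    intro htop
    exact hnc ⟨x, by rw [sup_comm] at htop; exact htop⟩

end Moves

/-! ### the main induction -/

section Main

set_option linter.unusedSectionVars false

variable {H : Type} [Group H] [Fintype H]

lemma grundy_eq_gam (hodd : Odd (Fintype.card H)) (hd : minGen H = 2) :
    ∀ (n : ℕ) (P : Finset (Vkl × H)), Fintype.card (Vkl × H) - P.card ≤ n →
      PGame.grundyValue (genGame P) = gam P := by
  intro n
  induction n with
  | zero =>
    intro P hP
    have hcard : P.card = Fintype.card (Vkl × H) := by
      have := Finset.card_le_univ P
      omega
    have hPuniv : P = Finset.univ := Finset.eq_univ_of_card P hcard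
    subst hPuniv
    have hcl : Subgroup.closure ((Finset.univ : Finset (Vkl × H)) : Set (Vkl × H)) = ⊤ := by
      rw [Finset.coe_univ, Subgroup.closure_univ]
    have hgg : genGame (Finset.univ : Finset (Vkl × H)) = 0 := by
      rw [genGame, if_pos hcl]
    rw [hgg, PGame.grundyValue_zero]
    obtain ⟨hA, hB⟩ := (closure_top_iff hodd _).1 hcl
    exact (gam_terminal hA hB).symm
  | succ n ih =>
    intro P hP
    by_cases hcl : Subgroup.closure (↑P : Set (Vkl × H)) = ⊤
    · have hgg : genGame P = 0 := by rw [genGame, if_pos hcl]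
      rw [hgg, PGame.grundyValue_zero]
      obtain ⟨hA, hB⟩ := (closure_top_iff hodd _).1 hcl
      exact (gam_terminal hA hB).symm
    · have hnt : ¬(APr P = ⊤ ∧ BPr P = ⊤) := fun h => hcl ((closure_top_iff hodd _).2 h)
      have hPlt : P.card < Fintype.card (Vkl × H) := by
        rcases lt_or_eq_of_le (Finset.card_le_univ P) with h | h
        · exact h
        · exfalso
          apply hcl
          have hu : P = Finset.univ := Finset.eq_univ_of_card P h
          rw [hu, Finset.coe_univ, Subgroup.closure_univ]
      have hgg : genGame P = PGame.mk {g : Vkl × H // g ∉ P} {g : Vkl × H // g ∉ P}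
          (fun g => genGame (insert g.1 P)) (fun g => genGame (insert g.1 P)) := by
        rw [genGame, if_neg hcl]
        congr! 1 <;>
          · funext g
            congr 1
            ext x
            simp [Finset.mem_insert]
      have hmove : PGame.grundyValue (genGame P)
          = sInf (Set.range fun g : {g : Vkl × H // g ∉ P} => gam (insert g.1 P))ᶜ := by
        rw [hgg, PGame.grundyValue]
        have hfun : (fun g : {g : Vkl × H // g ∉ P} =>
            Nimber.toOrdinal (PGame.grundyValue (genGame (insert g.1 P))))
            = fun g : {g : Vkl × H // g ∉ P} => Nimber.toOrdinal (gam (insert g.1 P)) := by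
          funext g
          have hins : Fintype.card (Vkl × H) - (insert g.1 P).card ≤ n := by
            have := Finset.card_insert_of_notMem g.2
            omega
          rw [ih (insert g.1 P) hins]
        rw [hfun]
        rfl
      rw [hmove]
      by_cases hE : Even P.card
      · by_cases h0 : APr P ≠ ⊥ ∧ ¬ ccl (BPr P)
        · rw [gam_even_eq_zero hnt hE h0.1 h0.2]
          apply mex_eq_zero
          rintro ⟨⟨g, hgP⟩, hg0⟩
          have hoddc : ¬ Even (insert g P).card := by
            rw [Finset.card_insert_of_notMem hgP, Nat.even_add_one]
            exact not_not_intro hE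
          have hBne : BPr (insert g P) ≠ ⊤ := by
            rw [BPr_insert]
            intro htop
            exact h0.2 ⟨g.2, by rw [sup_comm] at htop; exact htop⟩
          have hAne : APr (insert g P) ≠ ⊥ := by
            rw [APr_insert]
            intro hbot
            exact h0.1 (le_bot_iff.1 (hbot ▸ le_sup_right))
          exact gam_odd_ne_zero hoddc hBne (fun h => hAne h.1) hg0
        · rw [gam_even_eq_one hnt hE h0]
          push_neg at h0
          refine mex_eq_one ?_ ?_
          · -- some move has value 0
            by_cases hccB : ccl (BPr P)
            · by_cases hAbot : APr P = ⊥
              · -- a move (1, h) giving γ = 0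
                have hmain : ∃ hh : H, ((1:Vkl), hh) ∉ P := by
                  by_cases hBtop : BPr P = ⊤
                  · have hsub : P ⊆ ({(1:Vkl)} : Finset Vkl) ×ˢ (Finset.univ : Finset H) := by
                      intro g hg
                      rw [Finset.mem_product]
                      refine ⟨Finset.mem_singleton.2 ?_, Finset.mem_univ _⟩
                      have hmem := mem_APr_of_mem hg
                      rw [hAbot] at hmem
                      exact Subgroup.mem_bot.1 hmem
                    have hcardQ : (({(1:Vkl)} : Finset Vkl) ×ˢ (Finset.univ : Finset H)).card
                        = Fintype.card H := by
                      rw [Finset.card_product, Finset.card_singleton, one_mul, Finset.card_univ]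
                    obtain ⟨g, hgQ, hgP⟩ := finset_exists_not_mem hsub (by
                      intro h
                      rw [hcardQ] at h
                      rw [h] at hE
                      exact (Nat.not_even_iff_odd.2 hodd) hE)
                    obtain ⟨hg1, -⟩ := Finset.mem_product.1 hgQ
                    rw [Finset.mem_singleton] at hg1
                    exact ⟨g.2, by rwa [show ((1:Vkl), g.2) = g from Prod.ext hg1.symm rfl]⟩
                  · have hex : ∃ hh : H, hh ∉ BPr P := by
                      by_contra hall
                      push_neg at hall
                      exact hBtop ((Subgroup.eq_top_iff' (BPr P)).2 hall)
                    obtain ⟨hh, hhB⟩ := hex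
                    exact ⟨hh, fun hgP => hhB (mem_BPr_of_mem hgP)⟩
                obtain ⟨hh, hhP⟩ := hmain
                refine ⟨⟨((1:Vkl), hh), hhP⟩, ?_⟩
                show gam (insert ((1:Vkl), hh) P) = 0
                have hA' : APr (insert ((1:Vkl), hh) P) = ⊥ := by
                  rw [APr_insert_one rfl, hAbot]
                apply gam_odd_eq_zero
                · rintro ⟨ht1, -⟩
                  rw [hA'] at ht1
                  exact Vkl_bot_ne_top ht1
                · rw [Finset.card_insert_of_notMem hhP, Nat.even_add_one]
                  exact not_not_intro hE
                · exact hA'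
                · rw [BPr_insert]
                  exact ccl_mono le_sup_right hccB
              · -- terminal move
                obtain ⟨g, hgP, hA', hB'⟩ := terminal_move hccB hAbot hnt
                exact ⟨⟨g, hgP⟩, gam_terminal hA' hB'⟩
            · -- ¬ ccl B, hence A = ⊥; fresh generator move
              have hAbot : APr P = ⊥ := by
                by_contra hA
                exact hccB (h0 hA)
              obtain ⟨g, hgP, hg1, hcc', hB'ne⟩ := fresh_gen_move hd hccB
              refine ⟨⟨g, hgP⟩, ?_⟩
              show gam (insert g P) = 0
              have hA' : APr (insert g P) = ⊥ := by rw [APr_insert_one hg1, hAbot]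
              apply gam_odd_eq_zero
              · rintro ⟨ht1, -⟩
                rw [hA'] at ht1
                exact Vkl_bot_ne_top ht1
              · rw [Finset.card_insert_of_notMem hgP, Nat.even_add_one]
                exact not_not_intro hE
              · exact hA'
              · exact hcc'
          · -- no move has value 1
            rintro ⟨⟨g, hgP⟩, hg1⟩
            have hoddc : ¬ Even (insert g P).card := by
              rw [Finset.card_insert_of_notMem hgP, Nat.even_add_one]
              exact not_not_intro hE
            exact gam_ne_one_of_odd hoddc hg1
      · -- odd |P|
        by_cases h0 : APr P = ⊥ ∧ ccl (BPr P)
        · rw [gam_odd_eq_zero hnt hE h0.1 h0.2]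
          apply mex_eq_zero
          rintro ⟨⟨g, hgP⟩, hg0⟩
          have hevenc : Even (insert g P).card := by
            rw [Finset.card_insert_of_notMem hgP, Nat.even_add_one]
            exact hE
          have hA' : APr (insert g P) = Subgroup.closure {g.1} := by
            rw [APr_insert, h0.1, sup_bot_eq]
          refine gam_even_ne_zero hevenc ?_ ?_ hg0
          · rintro ⟨ht1, -⟩
            rw [hA'] at ht1
            exact Vkl_not_cyclic g.1 ht1
          · rintro ⟨-, hnc⟩
            rw [BPr_insert] at hnc
            exact hnc (ccl_mono le_sup_right h0.2)
        · rw [gam_odd_eq_two hnt hE h0]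
          refine mex_eq_two ?_ ?_ ?_
          · -- some move has value 0
            by_cases hccB : ccl (BPr P)
            · have hA : APr P ≠ ⊥ := fun h => h0 ⟨h, hccB⟩
              obtain ⟨g, hgP, hA', hB'⟩ := terminal_move hccB hA hnt
              exact ⟨⟨g, hgP⟩, gam_terminal hA' hB'⟩
            · by_cases hAbot : APr P = ⊥
              · obtain ⟨w, hw1, -⟩ := Vkl_exists_ne 1
                have hgP : (w, (1:H)) ∉ P := by
                  intro hgP
                  have hmem := mem_APr_of_mem hgP
                  rw [hAbot] at hmem
                  exact hw1 (Subgroup.mem_bot.1 hmem)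
                refine ⟨⟨(w, (1:H)), hgP⟩, ?_⟩
                show gam (insert (w, (1:H)) P) = 0
                have hA' : APr (insert (w, (1:H)) P) = Subgroup.closure {w} := by
                  rw [APr_insert, hAbot, sup_bot_eq]
                have hB' : BPr (insert (w, (1:H)) P) = BPr P := by
                  rw [BPr_insert, Subgroup.closure_singleton_one, bot_sup_eq]
                apply gam_even_eq_zero
                · rintro ⟨ht1, -⟩
                  rw [hA'] at ht1
                  exact Vkl_not_cyclic w ht1
                · rw [Finset.card_insert_of_notMem hgP, Nat.even_add_one]
                  exact hE
                · rw [hA']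
                  intro hbot
                  exact hw1 (Subgroup.mem_bot.1
                    (hbot ▸ Subgroup.mem_closure_singleton_self w))
                · rw [hB']
                  exact hccB
              · -- A ≠ ⊥, ¬ ccl B : parity move inside Vkl × B
                have hBfin : P ⊆ (Finset.univ : Finset Vkl)
                    ×ˢ (Finset.univ.filter (fun x : H => x ∈ BPr P)) := by
                  intro g hg
                  exact Finset.mem_product.2 ⟨Finset.mem_univ _,
                    Finset.mem_filter.2 ⟨Finset.mem_univ _, mem_BPr_of_mem hg⟩⟩
                have hcardT : Even ((Finset.univ : Finset Vkl)
                    ×ˢ (Finset.univ.filter (fun x : H => x ∈ BPr P))).card := by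
                  rw [Finset.card_product, Finset.card_univ]
                  exact Vkl_card_even.mul_right _
                obtain ⟨g, hgT, hgP⟩ := finset_exists_not_mem hBfin (by
                  intro h
                  rw [h] at hE
                  exact hE hcardT)
                have hg2 : g.2 ∈ BPr P :=
                  (Finset.mem_filter.1 (Finset.mem_product.1 hgT).2).2
                refine ⟨⟨g, hgP⟩, ?_⟩
                show gam (insert g P) = 0
                have hB' : BPr (insert g P) = BPr P := by
                  rw [BPr_insert, sup_eq_right.2 ((Subgroup.closure_le _).2 (by simpa using hg2))]
                apply gam_even_eq_zero
                · rintro ⟨-, ht2⟩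
                  rw [hB'] at ht2
                  exact hccB (ht2 ▸ ccl_top)
                · rw [Finset.card_insert_of_notMem hgP, Nat.even_add_one]
                  exact hE
                · rw [APr_insert]
                  intro hbot
                  exact hAbot (le_bot_iff.1 (hbot ▸ le_sup_right))
                · rw [hB']
                  exact hccB
          · -- some move has value 1
            by_cases hccB : ccl (BPr P)
            · have hA : APr P ≠ ⊥ := fun h => h0 ⟨h, hccB⟩
              -- a move inside the closure
              have hsub : P ⊆ (Finset.univ.filter (fun v : Vkl => v ∈ APr P))
                  ×ˢ (Finset.univ.filter (fun x : H => x ∈ BPr P)) := by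
                intro g hg
                exact Finset.mem_product.2
                  ⟨Finset.mem_filter.2 ⟨Finset.mem_univ _, mem_APr_of_mem hg⟩,
                   Finset.mem_filter.2 ⟨Finset.mem_univ _, mem_BPr_of_mem hg⟩⟩
              have hcardK : Even ((Finset.univ.filter (fun v : Vkl => v ∈ APr P))
                  ×ˢ (Finset.univ.filter (fun x : H => x ∈ BPr P))).card := by
                rw [Finset.card_product]
                exact (Vkl_even_filter hA).mul_right _
              obtain ⟨g, hgK, hgP⟩ := finset_exists_not_mem hsub (by
                intro h
                rw [h] at hE
                exact hE hcardK)
              have hg1 : g.1 ∈ APr P :=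
                (Finset.mem_filter.1 (Finset.mem_product.1 hgK).1).2
              have hg2 : g.2 ∈ BPr P :=
                (Finset.mem_filter.1 (Finset.mem_product.1 hgK).2).2
              refine ⟨⟨g, hgP⟩, ?_⟩
              show gam (insert g P) = 1
              have hA' : APr (insert g P) = APr P := by
                rw [APr_insert, sup_eq_right.2 ((Subgroup.closure_le _).2 (by simpa using hg1))]
              have hB' : BPr (insert g P) = BPr P := by
                rw [BPr_insert, sup_eq_right.2 ((Subgroup.closure_le _).2 (by simpa using hg2))]
              apply gam_even_eq_one
              · rw [hA', hB']
                exact hnt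
              · rw [Finset.card_insert_of_notMem hgP, Nat.even_add_one]
                exact hE
              · rintro ⟨-, hnc⟩
                rw [hB'] at hnc
                exact hnc hccB
            · obtain ⟨g, hgP, hg1, hcc', hB'ne⟩ := fresh_gen_move hd hccB
              refine ⟨⟨g, hgP⟩, ?_⟩
              show gam (insert g P) = 1
              apply gam_even_eq_one
              · rintro ⟨-, ht2⟩
                exact hB'ne ht2
              · rw [Finset.card_insert_of_notMem hgP, Nat.even_add_one]
                exact hE
              · rintro ⟨-, hnc⟩
                exact hnc hcc'
          · -- no move has value ∗2
            rintro ⟨⟨g, hgP⟩, hg2⟩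
            have hevenc : Even (insert g P).card := by
              rw [Finset.card_insert_of_notMem hgP, Nat.even_add_one]
              exact hE
            exact gam_ne_two_of_even hevenc hg2

end Main

theorem nimGEN_Z2sq_times_odd_of_minGen_eq_two (H : Type) [Group H] [Fintype H]
    (hH : Odd (Fintype.card H)) (hd : minGen H = 2) :
    nimGEN ((Multiplicative (ZMod 2) × Multiplicative (ZMod 2)) × H) = ∗1 := by
  have h := grundy_eq_gam hH hd (Fintype.card (Vkl × H)) (∅ : Finset (Vkl × H))
    (by simp)
  have hval : gam (∅ : Finset (Vkl × H)) = 1 := by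
    apply gam_even_eq_one
    · rintro ⟨h1, -⟩
      rw [APr_empty] at h1
      exact Vkl_bot_ne_top h1
    · simp
    · rintro ⟨h1, -⟩
      rw [APr_empty] at h1
      exact h1 rfl
  show PGame.grundyValue (genGame (∅ : Finset (Vkl × H))) = ∗1
  rw [h, hval]
  rfl
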